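/- For every real number x with 0 < x < 1, we have exp(x²/(1 - x)) = ∏_{n=1}^{∞} (1 - x^n)^{(μ(n) - φ(n))/n}. -/

import Mathlib

open Filter Real

private lemma sum_moebius_sub_totient (m : ℕ) (hm : m ≠ 0) :
    ∑ p ∈ m.divisorsAntidiagonal,
      ((ArithmeticFunction.moebius p.1 : ℝ) - (Nat.totient p.1 : ℝ)) =
      (if m = 1 then (1 : ℝ) else 0) - m := by
  rw [Finset.sum_sub_distrib]
  have h1 : ∑ p ∈ m.divisorsAntidiagonal, ((ArithmeticFunction.moebius p.1 : ℤ) : ℝ)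
      = ((if m = 1 then (1 : ℤ) else 0 : ℤ) : ℝ) := by
    rw [← ArithmeticFunction.one_apply (R := ℤ) (x := m),
      ← ArithmeticFunction.moebius_mul_coe_zeta, ArithmeticFunction.mul_apply]
    push_cast
    refine Finset.sum_congr rfl fun p hp => ?_
    have h2 : p.2 ≠ 0 := (Nat.ne_zero_of_mem_divisorsAntidiagonal hp).2
    rw [ArithmeticFunction.natCoe_apply, ArithmeticFunction.zeta_apply_ne h2]
    push_cast; ring
  have h2 : ∑ p ∈ m.divisorsAntidiagonal, ((Nat.totient p.1 : ℕ) : ℝ) = (m : ℝ) := by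
    rw [← Nat.cast_sum]
    norm_cast
    rw [Nat.sum_divisorsAntidiagonal (fun a _ => Nat.totient a)]
    exact Nat.sum_totient m
  rw [h1, h2]
  split_ifs <;> norm_num

/-- For 0 < x < 1, exp(x²/(1-x)) = ∏_{n=1}^∞ (1 - x^n)^((μ(n) - φ(n))/n). -/
theorem exp_eq_moebius_totient_product (x : ℝ) (hx0 : 0 < x) (hx1 : x < 1) :
    Filter.Tendsto
      (fun N : ℕ => ∏ n ∈ Finset.Icc 1 N,
        (1 - x ^ n) ^
          (((ArithmeticFunction.moebius n : ℝ) - (Nat.totient n : ℝ)) / (n : ℝ)))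
      Filter.atTop (nhds (Real.exp (x ^ 2 / (1 - x)))) := by
  set c : ℕ → ℝ := fun n => ((ArithmeticFunction.moebius n : ℝ) - (Nat.totient n : ℝ)) with hc
  have hc0 : c 0 = 0 := by simp [hc]
  have hcabs : ∀ n : ℕ, |c n| ≤ 2 * n := by
    intro n
    rcases Nat.eq_zero_or_pos n with rfl | hn
    · simp [hc0]
    have h1 : |(ArithmeticFunction.moebius n : ℝ)| ≤ 1 := by
      have := ArithmeticFunction.abs_moebius_le_one (n := n)
      exact_mod_cast (by exact_mod_cast this : |((ArithmeticFunction.moebius n : ℤ) : ℝ)| ≤ 1)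
    have h2 : |(Nat.totient n : ℝ)| ≤ n := by
      rw [abs_of_nonneg (by positivity)]
      exact_mod_cast Nat.totient_le n
    calc |c n| ≤ |(ArithmeticFunction.moebius n : ℝ)| + |(Nat.totient n : ℝ)| := abs_sub _ _
      _ ≤ 1 + n := add_le_add h1 h2
      _ ≤ 2 * n := by
          have : (1 : ℝ) ≤ n := by exact_mod_cast hn
          linarith
  have hxpos : ∀ n : ℕ, n ≠ 0 → (0:ℝ) < 1 - x ^ n := by
    intro n hn
    have := pow_lt_one₀ hx0.le hx1 hn
    linarith
  -- the double-sum function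
  set F : ℕ × ℕ → ℝ := fun p => c p.1 * x ^ (p.1 * p.2) / ((p.1 * p.2 : ℕ) : ℝ) with hF
  have hF0 : ∀ p : ℕ × ℕ, p.1 = 0 ∨ p.2 = 0 → F p = 0 := by
    rintro ⟨n, k⟩ (rfl | rfl) <;> simp [hF, hc0]
  -- Summability of F
  have hgeo : Summable fun n : ℕ => x ^ n := summable_geometric_of_lt_one hx0.le hx1
  have hFsum : Summable F := by
    apply Summable.of_norm_bounded (g := fun p : ℕ × ℕ => ((2 / x) * x ^ p.1) * x ^ p.2)
    · exact (hgeo.mul_left (2 / x)).mul_of_nonneg hgeo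
        (fun n => by positivity) (fun n => by positivity)
    · rintro ⟨n, k⟩
      rcases Nat.eq_zero_or_pos n with rfl | hn
      · rw [hF0 _ (Or.inl rfl)]; simp; positivity
      rcases Nat.eq_zero_or_pos k with rfl | hk
      · rw [hF0 _ (Or.inr rfl)]; simp; positivity
      have hnk : (0:ℝ) < (n * k : ℕ) := by positivity
      have key : x ^ (n * k + 1) ≤ x ^ (n + k) := by
        apply pow_le_pow_of_le_one hx0.le hx1.le
        obtain ⟨a, rfl⟩ := Nat.exists_eq_add_of_le hn
        obtain ⟨b, rfl⟩ := Nat.exists_eq_add_of_le hk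
        ring_nf
        nlinarith
      have hk1 : (1:ℝ) ≤ k := by exact_mod_cast hk
      have hn1 : (1:ℝ) ≤ n := by exact_mod_cast hn
      have habs : ‖F (n, k)‖ ≤ 2 * (n:ℝ) * x ^ (n * k) / ((n * k : ℕ) : ℝ) := by
        rw [hF]
        simp only [norm_div, norm_mul, Real.norm_eq_abs]
        rw [abs_of_pos hnk, abs_of_nonneg (pow_nonneg hx0.le _)]
        gcongr
        exact hcabs n
      calc ‖F (n, k)‖ ≤ 2 * (n:ℝ) * x ^ (n * k) / ((n * k : ℕ) : ℝ) := habs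
        _ = 2 * x ^ (n * k) / k := by
            push_cast
            field_simp
        _ ≤ 2 * x ^ (n * k) := by
            rw [div_le_iff₀ (by linarith)]
            nlinarith [pow_nonneg hx0.le (n * k)]
        _ = (2 / x) * x ^ (n * k + 1) := by
            rw [pow_succ]; field_simp
        _ ≤ (2 / x) * x ^ (n + k) :=
            mul_le_mul_of_nonneg_left key (by positivity)
        _ = ((2 / x) * x ^ n) * x ^ k := by rw [pow_add]; ring
  -- Row sums: summing over k for fixed n gives -(c n / n) * log(1 - x^n)... i.e.
  have hrow : ∀ n : ℕ, HasSum (fun k => F (n, k)) ((c n / n) * (-Real.log (1 - x ^ n))) := by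
    intro n
    rcases Nat.eq_zero_or_pos n with rfl | hn
    · simpa [hF, hc0] using (hasSum_zero : HasSum (fun _ : ℕ => (0:ℝ)) 0)
    have hy : |x ^ n| < 1 := by
      rw [abs_of_nonneg (pow_nonneg hx0.le n)]
      exact pow_lt_one₀ hx0.le hx1 hn.ne'
    have hlog := (hasSum_pow_div_log_of_abs_lt_one hy).mul_left (c n / n)
    have heq : (fun k : ℕ => F (n, k + 1)) =
        (fun k : ℕ => c n / n * ((x ^ n) ^ (k + 1) / ((k:ℝ) + 1))) := by
      funext k
      rw [hF]
      simp only
      rw [← pow_mul]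
      have hnn : ((n : ℝ)) ≠ 0 := by positivity
      have : ((n * (k + 1) : ℕ) : ℝ) = (n : ℝ) * ((k:ℝ) + 1) := by push_cast; ring
      rw [this]
      field_simp
    have h2 : HasSum (fun k : ℕ => F (n, k + 1)) (c n / n * -Real.log (1 - x ^ n)) := by
      rw [heq]; exact_mod_cast hlog
    have := (hasSum_nat_add_iff (f := fun k => F (n, k)) 1).mp h2
    simpa [hF0 (n, 0) (Or.inr rfl)] using this
  -- Fiberwise sums over m = n * k
  have hfiber := hFsum.hasSum.tsum_fiberwise (fun p => p.1 * p.2)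
  set g : ℕ → ℝ := fun m => if m ≤ 1 then 0 else -(x ^ m) with hg
  have hfib_eq : (fun m : ℕ => ∑' p : (fun p : ℕ × ℕ => p.1 * p.2) ⁻¹' {m}, F p) = g := by
    funext m
    rcases Nat.eq_zero_or_pos m with rfl | hm
    · have : ∀ p : (fun p : ℕ × ℕ => p.1 * p.2) ⁻¹' {(0:ℕ)}, F p = 0 := by
        rintro ⟨⟨n, k⟩, hp⟩
        simp only [Set.mem_preimage, Set.mem_singleton_iff, Nat.mul_eq_zero] at hp
        exact hF0 _ hp
      simp [this, hg]
    have hset : (fun p : ℕ × ℕ => p.1 * p.2) ⁻¹' {m} = (m.divisorsAntidiagonal : Set (ℕ × ℕ)) := by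
      ext p
      simp [Nat.mem_divisorsAntidiagonal, hm.ne']
    rw [hset, Finset.tsum_subtype' m.divisorsAntidiagonal F]
    have : ∑ p ∈ m.divisorsAntidiagonal, F p
        = (∑ p ∈ m.divisorsAntidiagonal, c p.1) * x ^ m / m := by
      rw [Finset.sum_mul, Finset.sum_div]
      refine Finset.sum_congr rfl fun p hp => ?_
      simp only [hF]
      rw [(Nat.mem_divisorsAntidiagonal.mp hp).1]
    rcases eq_or_lt_of_le (Nat.one_le_iff_ne_zero.mpr hm.ne') with h1 | h1
    · rw [this, sum_moebius_sub_totient m hm.ne', if_pos h1.symm, hg]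
      simp [← h1]
    · have hm2 : ¬ m ≤ 1 := by omega
      have hmne : (m : ℝ) ≠ 0 := by positivity
      rw [this, sum_moebius_sub_totient m hm.ne', if_neg (by omega : ¬ m = 1),
        hg]
      simp only [hm2, ite_false]
      field_simp
      try ring
  rw [hfib_eq] at hfiber
  -- g sums to -(x^2/(1-x))
  have hgsum : HasSum g (-(x ^ 2 / (1 - x))) := by
    have base : HasSum (fun k : ℕ => -(x ^ 2 * x ^ k)) (-(x ^ 2 * (1 - x)⁻¹)) :=
      ((hasSum_geometric_of_lt_one hx0.le hx1).mul_left (x ^ 2)).neg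
    have heq : (fun k : ℕ => g (k + 2)) = fun k : ℕ => -(x ^ 2 * x ^ k) := by
      funext k
      rw [hg]
      simp only
      rw [if_neg (by omega : ¬ k + 2 ≤ 1), pow_add]
      ring
    have h2 : HasSum (fun k : ℕ => g (k + 2)) (-(x ^ 2 * (1 - x)⁻¹)) := by
      rw [heq]; exact base
    have := (hasSum_nat_add_iff (f := g) 2).mp h2
    have hsum2 : ∑ i ∈ Finset.range 2, g i = 0 := by
      simp [hg, Finset.sum_range_succ]
    rw [hsum2, add_zero] at this
    rwa [div_eq_mul_inv]
  have htsum : ∑' p, F p = -(x ^ 2 / (1 - x)) := hfiber.unique hgsum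
  -- Therefore the row sums sum to -(x^2/(1-x))
  have hmain : HasSum (fun n : ℕ => (c n / n) * Real.log (1 - x ^ n)) (x ^ 2 / (1 - x)) := by
    have := HasSum.prod_fiberwise hFsum.hasSum hrow
    rw [htsum] at this
    have := this.neg
    simpa using this
  -- Turn the HasSum into a Tendsto over partial sums and exponentiate
  have hT := hmain.tendsto_sum_nat
  have hprod_eq : ∀ N : ℕ,
      (∏ n ∈ Finset.Icc 1 N, (1 - x ^ n) ^ (c n / (n : ℝ)))
        = Real.exp (∑ n ∈ Finset.range (N + 1), (c n / n) * Real.log (1 - x ^ n)) := by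
    intro N
    have hsub : ∑ n ∈ Finset.range (N + 1), (c n / n) * Real.log (1 - x ^ n)
        = ∑ n ∈ Finset.Icc 1 N, (c n / n) * Real.log (1 - x ^ n) := by
      refine (Finset.sum_subset ?_ ?_).symm
      · intro a ha
        simp only [Finset.mem_Icc] at ha
        simp only [Finset.mem_range]
        omega
      · intro a ha ha'
        simp only [Finset.mem_range] at ha
        simp only [Finset.mem_Icc] at ha'
        have : a = 0 := by omega
        subst this
        simp [hc0]
    rw [hsub, Real.exp_sum]
    refine Finset.prod_congr rfl fun n hn => ?_
    have hn1 : n ≠ 0 := by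
      simp only [Finset.mem_Icc] at hn; omega
    rw [Real.rpow_def_of_pos (hxpos n hn1)]
    ring_nf
  have : Filter.Tendsto
      (fun N : ℕ => ∑ n ∈ Finset.range (N + 1), (c n / n) * Real.log (1 - x ^ n))
      Filter.atTop (nhds (x ^ 2 / (1 - x))) :=
    hT.comp (tendsto_add_atTop_nat 1)
  have hfinal := (Real.continuous_exp.continuousAt.tendsto).comp this
  refine hfinal.congr fun N => ?_
  exact (hprod_eq N).symm
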